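/- Let ι be a finite index set, and for each i ∈ ι let G_i be a finite commutative group with n_i elements. Let L be a positive integer such that every element of every G_i has order dividing L. Let H be a commutative group generated by a finite set of at most r elements, and let φ : H → ∏_{i∈ι} G_i be a group homomorphism. For each i ∈ ι let m_i be an integer with 1 ≤ m_i ≤ n_i, and choose independently, for each i, a subset s_i of G_i uniformly at random among all m_i-element subsets of G_i. Then the probability that there exists h ∈ H with φ(h)_i ∈ s_i for every i ∈ ι is at most L^r · ∏_{i∈ι} (m_i/n_i). -/

import Mathlib

open scoped Classical

private lemma aux_closure_le {K : Type*} [CommGroup K] [DecidableEq K]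
    (L : ℕ) (hL : 0 < L) (hexp : ∀ g : K, g ^ L = 1) (T : Finset K) :
    ∃ F : Finset K, F.card ≤ L ^ T.card ∧
      (Subgroup.closure (T : Set K) : Set K) ⊆ ↑F := by
  classical
  have hpow : ∀ (x : K) (a : ℕ), x ^ (a % L) = x ^ a := by
    intro x a
    conv_rhs => rw [← Nat.mod_add_div a L]
    rw [pow_add, pow_mul, hexp, one_pow, mul_one]
  set Φ : (↥T → Fin L) → K := fun e => ∏ y : ↥T, (y : K) ^ ((e y : ℕ)) with hΦ
  refine ⟨Finset.image Φ Finset.univ, ?_, ?_⟩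
  · calc (Finset.image Φ Finset.univ).card ≤ (Finset.univ : Finset (↥T → Fin L)).card :=
          Finset.card_image_le
      _ = L ^ T.card := by
          simp [Fintype.card_fun]
  · intro x hx
    simp only [Finset.coe_image, Set.mem_image, Finset.mem_coe]
    have : ∃ e : ↥T → Fin L, Φ e = x := by
      refine Subgroup.closure_induction (p := fun x _ => ∃ e : ↥T → Fin L, Φ e = x)
        ?_ ?_ ?_ ?_ hx
      · intro z hz
        refine ⟨fun y => if y = (⟨z, hz⟩ : ↥T) then ⟨1 % L, Nat.mod_lt _ hL⟩ else ⟨0, hL⟩, ?_⟩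
        have : Φ (fun y => if y = (⟨z, hz⟩ : ↥T) then ⟨1 % L, Nat.mod_lt _ hL⟩ else ⟨0, hL⟩)
            = ∏ y : ↥T, (if y = (⟨z, hz⟩ : ↥T) then (y : K) ^ (1 % L) else 1) := by
          refine Finset.prod_congr rfl fun y _ => ?_
          by_cases h : y = (⟨z, hz⟩ : ↥T) <;> simp [h]
        rw [this, Fintype.prod_ite_eq' (⟨z, hz⟩ : ↥T) (fun y => (y : K) ^ (1 % L))]
        simpa using hpow z 1
      · exact ⟨fun _ => ⟨0, hL⟩, by simp [hΦ]⟩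
      · rintro a b _ _ ⟨e, rfl⟩ ⟨e', rfl⟩
        refine ⟨fun y => ⟨((e y : ℕ) + (e' y : ℕ)) % L, Nat.mod_lt _ hL⟩, ?_⟩
        simp only [hΦ, ← Finset.prod_mul_distrib]
        exact Finset.prod_congr rfl fun y _ => by rw [hpow, pow_add]
      · rintro a _ ⟨e, rfl⟩
        refine ⟨fun y => ⟨(L - (e y : ℕ)) % L, Nat.mod_lt _ hL⟩, ?_⟩
        simp only [hΦ, ← Finset.prod_inv_distrib]
        refine Finset.prod_congr rfl fun y _ => ?_
        rw [hpow]
        refine inv_eq_of_mul_eq_one_right ?_ |>.symm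
        rw [← pow_add, Nat.add_sub_cancel' (le_of_lt (e y).2), hexp]
    obtain ⟨e, he⟩ := this
    exact ⟨e, Finset.mem_univ e, he⟩

private lemma aux_count {α : Type*} [DecidableEq α] (s : Finset α) (a : α) (ha : a ∈ s)
    (k : ℕ) :
    ((s.powersetCard (k + 1)).filter (fun t => a ∈ t)).card
      = ((s.erase a).powersetCard k).card := by
  classical
  refine Finset.card_bij (fun t _ => t.erase a) ?_ ?_ ?_
  · intro t ht
    simp only [Finset.mem_filter, Finset.mem_powersetCard] at ht ⊢
    obtain ⟨⟨hts, htc⟩, hat⟩ := ht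
    exact ⟨Finset.erase_subset_erase a hts, by rw [Finset.card_erase_of_mem hat, htc]; rfl⟩
  · intro t ht t' ht' h
    simp only [Finset.mem_filter, Finset.mem_powersetCard] at ht ht'
    rw [← Finset.insert_erase ht.2, ← Finset.insert_erase ht'.2]
    exact congrArg (insert a) h
  · intro u hu
    simp only [Finset.mem_powersetCard] at hu
    have hau : a ∉ u := fun h => (Finset.mem_erase.1 (hu.1 h)).1 rfl
    refine ⟨insert a u, ?_, ?_⟩
    · simp only [Finset.mem_filter, Finset.mem_powersetCard]
      exact ⟨⟨Finset.insert_subset ha (hu.1.trans (Finset.erase_subset a s)),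
        by rw [Finset.card_insert_of_notMem hau, hu.2]⟩, Finset.mem_insert_self a u⟩
    · show (insert a u).erase a = u
      exact Finset.erase_insert hau

/-- Let `G i` (for `i` in a finite index set) be finite commutative groups with
`n i` elements, all of exponent dividing a positive integer `L`.  Let `H` be a
commutative group generated by at most `r` elements and `φ : H →* ∏ i, G i` a
homomorphism.  For each `i` choose independently a subset `s i` of `G i` uniformly
at random among all `m i`-element subsets, where `1 ≤ m i ≤ n i`.  Then the
probability that some `h ∈ H` satisfies `φ h i ∈ s i` for every `i` is at most
`L ^ r * ∏ i, (m i / n i)`. -/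
theorem stmt6 {ι : Type*} [Fintype ι] [DecidableEq ι] {G : ι → Type*}
    [∀ i, CommGroup (G i)] [∀ i, Fintype (G i)] [∀ i, DecidableEq (G i)]
    (n m : ι → ℕ) (hn : ∀ i, Fintype.card (G i) = n i)
    (L : ℕ) (hL : 0 < L) (hexp : ∀ i, ∀ g : G i, g ^ L = 1)
    {H : Type*} [CommGroup H] (r : ℕ) (S : Finset H) (hScard : S.card ≤ r)
    (hSgen : Subgroup.closure (S : Set H) = ⊤)
    (φ : H →* (∀ i, G i))
    (hm1 : ∀ i, 1 ≤ m i) (hmn : ∀ i, m i ≤ n i) :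
    ∑ s : ∀ i, Finset (G i),
      (if ∃ h : H, ∀ i, φ h i ∈ s i then
        ∏ i, (PMF.uniformOfFinset ((Finset.univ : Finset (G i)).powersetCard (m i))
          (Finset.powersetCard_nonempty.2 (by simp [hn i, hmn i]))) (s i)
      else 0) ≤ (L : ENNReal) ^ r * ∏ i, (m i : ENNReal) / (n i) := by
  classical
  set p : ∀ i, PMF (Finset (G i)) := fun i =>
    PMF.uniformOfFinset ((Finset.univ : Finset (G i)).powersetCard (m i))
      (Finset.powersetCard_nonempty.2 (by simp [hn i, hmn i])) with hp
  have hexpK : ∀ g : (∀ i, G i), g ^ L = 1 := fun g => funext fun i => hexp i (g i)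
  obtain ⟨F, hFcard, hFsub⟩ := aux_closure_le L hL hexpK (S.image φ)
  have hrange : ∀ h : H, φ h ∈ F := by
    intro h
    apply hFsub
    have : φ h ∈ Subgroup.map φ ⊤ := ⟨h, trivial, rfl⟩
    rw [← hSgen, MonoidHom.map_closure, ← Finset.coe_image] at this
    exact this
  -- per-coordinate bound
  have key : ∀ (i : ι) (a : G i),
      (∑ t : Finset (G i), if a ∈ t then p i t else 0)
        ≤ (m i : ENNReal) / (n i) := by
    intro i a
    have hn0 : (0 : ℕ) < n i := lt_of_lt_of_le (hm1 i) (hmn i)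
    have hsum : (∑ t : Finset (G i), if a ∈ t then p i t else 0)
        = (((Finset.univ : Finset (G i)).powersetCard (m i)).filter
            (fun t => a ∈ t)).card * ((n i).choose (m i) : ENNReal)⁻¹ := by
      rw [hp]
      have step : ∀ t : Finset (G i), (if a ∈ t then
          (PMF.uniformOfFinset ((Finset.univ : Finset (G i)).powersetCard (m i))
            (Finset.powersetCard_nonempty.2 (by simp [hn i, hmn i]))) t else 0)
          = if t ∈ ((Finset.univ : Finset (G i)).powersetCard (m i)).filter (fun t => a ∈ t)
              then ((n i).choose (m i) : ENNReal)⁻¹ else 0 := by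
        intro t
        by_cases h1 : a ∈ t <;>
          by_cases h2 : t ∈ (Finset.univ : Finset (G i)).powersetCard (m i) <;>
          simp [h1, h2, PMF.uniformOfFinset_apply, Finset.card_powersetCard,
            Finset.card_univ, hn i]
      rw [Finset.sum_congr rfl (fun t _ => step t), ← Finset.sum_filter,
        Finset.filter_univ_mem, Finset.sum_const, nsmul_eq_mul]
    rw [hsum]
    have hm' : m i = (m i - 1) + 1 := (Nat.succ_pred_eq_of_pos (hm1 i)).symm
    have hcount : (((Finset.univ : Finset (G i)).powersetCard (m i)).filter
        (fun t => a ∈ t)).card = ((n i) - 1).choose (m i - 1) := by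
      conv_lhs => rw [hm']
      rw [aux_count (Finset.univ : Finset (G i)) a (Finset.mem_univ a) (m i - 1)]
      rw [Finset.card_powersetCard, Finset.card_erase_of_mem (Finset.mem_univ a),
        Finset.card_univ, hn i]
    rw [hcount]
    have hchoose0 : ((n i).choose (m i) : ENNReal) ≠ 0 := by
      exact_mod_cast (Nat.choose_pos (hmn i)).ne'
    have hchooseT : ((n i).choose (m i) : ENNReal) ≠ ⊤ := ENNReal.natCast_ne_top _
    have hnT : ((n i) : ENNReal) ≠ 0 := by exact_mod_cast hn0.ne'
    have hnat : ((n i) - 1).choose (m i - 1) * n i = m i * (n i).choose (m i) := by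
      have h := Nat.add_one_mul_choose_eq (n i - 1) (m i - 1)
      have e1 : n i - 1 + 1 = n i := by omega
      have e2 : m i - 1 + 1 = m i := by omega
      simp only [Nat.succ_eq_add_one, e1, e2] at h
      calc ((n i) - 1).choose (m i - 1) * n i = n i * ((n i) - 1).choose (m i - 1) :=
            mul_comm _ _
        _ = (n i).choose (m i) * m i := h
        _ = m i * (n i).choose (m i) := mul_comm _ _
    have hc : ((n i - 1).choose (m i - 1) : ENNReal) * (n i) = (m i) * ((n i).choose (m i)) := by
      exact_mod_cast hnat
    calc ((n i - 1).choose (m i - 1) : ENNReal) * ((n i).choose (m i) : ENNReal)⁻¹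
        = ((n i - 1).choose (m i - 1) : ENNReal) / ((n i).choose (m i)) :=
          (div_eq_mul_inv _ _).symm
      _ = ((n i - 1).choose (m i - 1) : ENNReal) * (n i)
            / (((n i).choose (m i) : ENNReal) * (n i)) :=
          (ENNReal.mul_div_mul_right _ _ hnT (ENNReal.natCast_ne_top _)).symm
      _ = ((m i) * ((n i).choose (m i)) : ENNReal)
            / (((n i) : ENNReal) * ((n i).choose (m i))) := by
          rw [hc, mul_comm (((n i).choose (m i)) : ENNReal) ((n i) : ENNReal)]
      _ ≤ (m i : ENNReal) / (n i) :=
          le_of_eq (ENNReal.mul_div_mul_right _ _ hchoose0 hchooseT)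
  -- main chain
  calc ∑ s : ∀ i, Finset (G i),
      (if ∃ h : H, ∀ i, φ h i ∈ s i then ∏ i, p i (s i) else 0)
      ≤ ∑ s : ∀ i, Finset (G i), ∑ x ∈ F,
          (if ∀ i, x i ∈ s i then ∏ i, p i (s i) else 0) := by
        refine Finset.sum_le_sum fun s _ => ?_
        split_ifs with h
        · obtain ⟨h0, hh0⟩ := h
          calc ∏ i, p i (s i)
              = (if ∀ i, φ h0 i ∈ s i then ∏ i, p i (s i) else 0) := (if_pos hh0).symm
            _ ≤ ∑ x ∈ F, (if ∀ i, x i ∈ s i then ∏ i, p i (s i) else 0) :=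
                Finset.single_le_sum
                  (f := fun x : ∀ i, G i => if ∀ i, x i ∈ s i then ∏ i, p i (s i) else 0)
                  (fun x _ => zero_le) (hrange h0)
        · exact zero_le
    _ = ∑ x ∈ F, ∑ s : ∀ i, Finset (G i),
          (if ∀ i, x i ∈ s i then ∏ i, p i (s i) else 0) := Finset.sum_comm
    _ ≤ ∑ x ∈ F, ∏ i, (m i : ENNReal) / (n i) := by
        refine Finset.sum_le_sum fun x _ => ?_
        have heq : ∀ s : ∀ i, Finset (G i),
            (if ∀ i, x i ∈ s i then ∏ i, p i (s i) else 0)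
              = ∏ i, (if x i ∈ s i then p i (s i) else 0) := by
          intro s
          split_ifs with h
          · exact Finset.prod_congr rfl fun i _ => (if_pos (h i)).symm
          · obtain ⟨i, hi⟩ := not_forall.1 h
            exact (Finset.prod_eq_zero (Finset.mem_univ i)
              (show (if x i ∈ s i then p i (s i) else 0) = 0 from if_neg hi)).symm
        simp_rw [heq]
        rw [← Fintype.prod_sum (f := fun i t => if x i ∈ t then p i t else 0)]
        exact Finset.prod_le_prod' fun i _ => key i (x i)
    _ = (F.card : ENNReal) * ∏ i, (m i : ENNReal) / (n i) := by
        rw [Finset.sum_const, nsmul_eq_mul]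
    _ ≤ (L : ENNReal) ^ r * ∏ i, (m i : ENNReal) / (n i) := by
        refine mul_le_mul_left ?_ _
        calc (F.card : ENNReal) ≤ ((L ^ (S.image φ).card : ℕ) : ENNReal) := by
              exact_mod_cast hFcard
          _ = (L : ENNReal) ^ (S.image φ).card := by push_cast; ring
          _ ≤ (L : ENNReal) ^ r := by
              have h1 : (1 : ENNReal) ≤ L := by exact_mod_cast hL
              exact pow_le_pow_right₀ h1 (le_trans Finset.card_image_le hScard)
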